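/- Let g_1,...,g_k be isotone maps P → [n] with g_j(p_i) ∈ B_i, where max(B_i) ≤ min(B_j) need not hold, and any map h : P → [n] with h(p_i) ∈ B_i is automatically isotone (i.e., B_i's are 'order-compatible'). Define f_ℓ(p_i) to be the ℓ-th smallest element of the multiset {g_1(p_i),...,g_k(p_i)}. Then each f_ℓ is isotone and f_1 ≤ f_2 ≤ ⋯ ≤ f_k pointwise. -/

import Mathlib

/-- The `ℓ`-th smallest element (0-indexed) of the multiset
`{g 0 i, …, g (k-1) i}`. -/
noncomputable def nthSmallest (m n k : ℕ) (hn : 0 < n)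
    (g : Fin k → (Fin m → Fin n)) (i : Fin m) (ℓ : ℕ) : Fin n :=
  (Multiset.sort
    (Multiset.map (fun t => g t i) (Finset.univ : Finset (Fin k)).val) (· ≤ ·)).getD ℓ
    ⟨0, hn⟩

lemma sorted_getD_le_iff {α : Type*} [LinearOrder α] {l : List α} (hs : l.Pairwise (· ≤ ·))
    {ℓ : ℕ} (hℓ : ℓ < l.length) (d y : α) :
    l.getD ℓ d ≤ y ↔ ℓ < l.countP (fun x => decide (x ≤ y)) := by
  rw [List.getD_eq_getElem l d hℓ]
  constructor
  · intro h
    have hsub : (l.take (ℓ+1)).Sublist l := List.take_sublist _ _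
    have hlen : (l.take (ℓ+1)).length = ℓ+1 := by
      rw [List.length_take]; omega
    have hall : ∀ x ∈ l.take (ℓ+1), decide (x ≤ y) = true := by
      intro x hx
      obtain ⟨j, hj, rfl⟩ := List.mem_iff_getElem.mp hx
      rw [List.getElem_take]
      simp only [decide_eq_true_eq]
      exact le_trans (hs.rel_get_of_le (by simp [Fin.le_def]; rw [hlen] at hj; omega)) h
    have := List.countP_eq_length (p := fun x => decide (x ≤ y)) (l := l.take (ℓ+1)) |>.mpr hall
    have hle := hsub.countP_le (p := fun x => decide (x ≤ y))
    omega
  · intro h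
    by_contra hlt
    push_neg at hlt
    -- every element satisfying the predicate is among the first ℓ entries
    have : l.countP (fun x => decide (x ≤ y)) ≤ ℓ := by
      have hsplit : l = l.take ℓ ++ l.drop ℓ := (List.take_append_drop ℓ l).symm
      rw [hsplit, List.countP_append]
      have h1 : (l.take ℓ).countP (fun x => decide (x ≤ y)) ≤ ℓ := by
        calc (l.take ℓ).countP _ ≤ (l.take ℓ).length := List.countP_le_length
        _ ≤ ℓ := by rw [List.length_take]; omega
      have h2 : (l.drop ℓ).countP (fun x => decide (x ≤ y)) = 0 := by
        rw [List.countP_eq_zero]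
        intro x hx
        obtain ⟨j, hj, rfl⟩ := List.mem_iff_getElem.mp hx
        have hjl : ℓ + j < l.length := by
          rw [List.length_drop] at hj; omega
        rw [List.getElem_drop]
        simp only [decide_eq_true_eq, not_le]
        have : l[ℓ] ≤ l[ℓ + j] := hs.rel_get_of_le (by simp [Fin.le_def])
        exact lt_of_lt_of_le hlt this
      omega
    omega

lemma count_le_in_map {n k : ℕ} (f : Fin k → Fin n) (y : Fin n) :
    (Multiset.map f (Finset.univ : Finset (Fin k)).val).countP (fun x => decide (x ≤ y))
      = (Finset.univ.filter (fun t => f t ≤ y)).card := by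
  rw [Multiset.countP_map]
  simp [Finset.card_filter, Finset.filter]

lemma key {m n k : ℕ} (hn : 0 < n) (g : Fin k → (Fin m → Fin n)) {i j : Fin m}
    (hle : ∀ t, g t i ≤ g t j) {ℓ : ℕ} (hℓ : ℓ < k) :
    nthSmallest m n k hn g i ℓ ≤ nthSmallest m n k hn g j ℓ := by
  set li := Multiset.sort (Multiset.map (fun t => g t i) (Finset.univ : Finset (Fin k)).val) (· ≤ ·) with hli
  set lj := Multiset.sort (Multiset.map (fun t => g t j) (Finset.univ : Finset (Fin k)).val) (· ≤ ·) with hlj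
  have hleni : li.length = k := by
    rw [hli, Multiset.length_sort, Multiset.card_map]; simp
  have hlenj : lj.length = k := by
    rw [hlj, Multiset.length_sort, Multiset.card_map]; simp
  have hsi : li.Pairwise (· ≤ ·) := Multiset.pairwise_sort _ _
  have hsj : lj.Pairwise (· ≤ ·) := Multiset.pairwise_sort _ _
  show li.getD ℓ ⟨0, hn⟩ ≤ lj.getD ℓ ⟨0, hn⟩
  set y := lj.getD ℓ ⟨0, hn⟩ with hy
  rw [sorted_getD_le_iff hsi (by omega) _ y]
  have hcj : ℓ < lj.countP (fun x => decide (x ≤ y)) :=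
    (sorted_getD_le_iff hsj (by omega) ⟨0, hn⟩ y).mp le_rfl
  have hperm_i : li.countP (fun x => decide (x ≤ y))
      = (Finset.univ.filter (fun t => g t i ≤ y)).card := by
    rw [hli, ← count_le_in_map (fun t => g t i) y, ← Multiset.coe_countP,
      Multiset.sort_eq]
    simp
  have hperm_j : lj.countP (fun x => decide (x ≤ y))
      = (Finset.univ.filter (fun t => g t j ≤ y)).card := by
    rw [hlj, ← count_le_in_map (fun t => g t j) y, ← Multiset.coe_countP,
      Multiset.sort_eq]
    simp
  rw [hperm_i]
  rw [hperm_j] at hcj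
  refine lt_of_lt_of_le hcj (Finset.card_le_card ?_)
  intro t ht
  simp only [Finset.mem_filter, Finset.mem_univ, true_and] at ht ⊢
  exact le_trans (hle t) ht

/-- if every map `h` with `h(pᵢ) ∈ Bᵢ` is automatically isotone,
and `g₁,…,g_k` are isotone maps with values `g_t(pᵢ) ∈ Bᵢ`, then the maps
`f_ℓ(pᵢ) :=` the `ℓ`-th smallest element of `{g₁(pᵢ),…,g_k(pᵢ)}` are isotone
and form a weakly increasing chain `f₁ ≤ f₂ ≤ ⋯ ≤ f_k`. -/
theorem stmt15 (m n k : ℕ) (hn : 0 < n) (r : Fin m → Fin m → Prop)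
    (hrefl : ∀ i, r i i) (htrans : ∀ i j l, r i j → r j l → r i l)
    (hcompat : ∀ i j, r i j → i ≤ j)
    (B : Fin m → Finset (Fin n)) (hB : ∀ i, (B i).Nonempty)
    (hauto : ∀ h : Fin m → Fin n, (∀ i, h i ∈ B i) →
      ∀ i j, r i j → h i ≤ h j)
    (g : Fin k → (Fin m → Fin n))
    (hgB : ∀ t i, g t i ∈ B i)
    (hgiso : ∀ t, ∀ i j, r i j → g t i ≤ g t j) :
    (∀ ℓ : ℕ, ℓ < k → ∀ i j, r i j →
      nthSmallest m n k hn g i ℓ ≤ nthSmallest m n k hn g j ℓ) ∧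
    (∀ ℓ ℓ' : ℕ, ℓ ≤ ℓ' → ℓ' < k → ∀ i,
      nthSmallest m n k hn g i ℓ ≤ nthSmallest m n k hn g i ℓ') := by
  constructor
  · intro ℓ hℓ i j hij
    exact key hn g (fun t => hgiso t i j hij) hℓ
  · intro ℓ ℓ' hle hℓ' i
    set l := Multiset.sort (Multiset.map (fun t => g t i) (Finset.univ : Finset (Fin k)).val) (· ≤ ·)
    have hlen : l.length = k := by
      rw [Multiset.length_sort, Multiset.card_map]; simp
    have hs : l.Pairwise (· ≤ ·) := Multiset.pairwise_sort _ _
    show l.getD ℓ ⟨0, hn⟩ ≤ l.getD ℓ' ⟨0, hn⟩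
    rw [List.getD_eq_getElem l _ (by omega), List.getD_eq_getElem l _ (by omega)]
    exact hs.rel_get_of_le (by simp [Fin.le_def]; omega)
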